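/- (Two-variable Poisson formula) Let z₀, w₀ ∈ ℂ, let R > 0, and let h be a real-valued continuous function on the closed bidisc {|z − z₀| ≤ R} × {|w − w₀| ≤ R} such that on the open bidisc h is harmonic in z for each fixed w and harmonic in w for each fixed z. Then for every 0 < r ≤ R and every (z,w) with |z − z₀| < r and |w − w₀| < r, h(z,w) = (1/(2π)²) ∫₀^{2π} ∫₀^{2π} h(z₀ + re^{it}, w₀ + re^{is}) · Re((re^{it} + (z − z₀))/(re^{it} − (z − z₀))) · Re((re^{is} + (w − w₀))/(re^{is} − (w − w₀))) dt ds. -/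

import Mathlib

open Complex Metric Set intervalIntegral
open Complex Metric

/-- A real-valued function on an open subset of `ℂ` is harmonic there if it is twice
continuously differentiable and satisfies Laplace's equation
`∂²u/∂x² + ∂²u/∂y² = 0` (directions `1` and `i`). -/
def HarmonicOnC (u : ℂ → ℝ) (U : Set ℂ) : Prop :=
  ContDiffOn ℝ 2 u U ∧ ∀ z ∈ U,
    fderiv ℝ (fun y => fderiv ℝ u y 1) z 1 +
      fderiv ℝ (fun y => fderiv ℝ u y Complex.I) z Complex.I = 0

lemma clm_apply_eq (L : ℂ →L[ℝ] ℂ) (v : ℂ) : L v = v.re • L 1 + v.im • L I := by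
  conv_lhs => rw [← Complex.re_add_im v]
  have h1 : (v.re : ℂ) = v.re • (1 : ℂ) := by simp [Complex.real_smul]
  have h2 : (v.im : ℂ) * I = v.im • I := by simp [Complex.real_smul]
  rw [h1, h2, map_add, map_smul, map_smul]

noncomputable def gderiv (u : ℂ → ℝ) : ℂ → ℂ :=
  fun z => (fderiv ℝ u z 1 : ℂ) - (fderiv ℝ u z Complex.I : ℂ) * Complex.I

lemma gderiv_holo {u : ℂ → ℝ} {c : ℂ} {R : ℝ} (hu : HarmonicOnC u (ball c R)) :
    DifferentiableOn ℂ (gderiv u) (ball c R) := by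
  intro z hz
  have hmem : ball c R ∈ nhds z := isOpen_ball.mem_nhds hz
  have hC2 : ContDiffAt ℝ 2 u z := hu.1.contDiffAt hmem
  have hf1 : ContDiffAt ℝ 1 (fderiv ℝ u) z := hC2.fderiv_right (by norm_num)
  have hD : HasFDerivAt (fderiv ℝ u) (fderiv ℝ (fderiv ℝ u) z) z :=
    (hf1.differentiableAt one_ne_zero).hasFDerivAt
  set D := fderiv ℝ (fderiv ℝ u) z with hDdef
  have hv : ∀ v : ℂ, HasFDerivAt (fun y => fderiv ℝ u y v)
      ((ContinuousLinearMap.apply ℝ ℝ v).comp D) z :=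
    fun v => ((ContinuousLinearMap.apply ℝ ℝ v).hasFDerivAt).comp z hD
  have hev : ∀ᶠ y in nhds z, HasFDerivAt u (fderiv ℝ u y) y := by
    filter_upwards [hmem] with y hy
    exact (((hu.1.contDiffAt (isOpen_ball.mem_nhds hy)).differentiableAt
      (by norm_num)).hasFDerivAt)
  have hsymm : D 1 I = D I 1 := second_derivative_symmetric_of_eventually hev hD 1 I
  have hlap : D 1 1 + D I I = 0 := by
    have e1 := (hv 1).fderiv
    have e2 := (hv I).fderiv
    have := hu.2 z hz
    rw [e1, e2] at this
    simpa using this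
  have h1 : HasFDerivAt (fun y => ((fderiv ℝ u y 1 : ℝ) : ℂ))
      (Complex.ofRealCLM.comp ((ContinuousLinearMap.apply ℝ ℝ 1).comp D)) z :=
    Complex.ofRealCLM.hasFDerivAt.comp z (hv 1)
  have h2 : HasFDerivAt (fun y => ((fderiv ℝ u y I : ℝ) : ℂ))
      (Complex.ofRealCLM.comp ((ContinuousLinearMap.apply ℝ ℝ I).comp D)) z :=
    Complex.ofRealCLM.hasFDerivAt.comp z (hv I)
  have hg := h1.sub (h2.mul_const I)
  set Lr := (Complex.ofRealCLM.comp ((ContinuousLinearMap.apply ℝ ℝ 1).comp D)) -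
    I • (Complex.ofRealCLM.comp ((ContinuousLinearMap.apply ℝ ℝ I).comp D)) with hLr
  have hgL : HasFDerivAt (gderiv u) Lr z := hg
  have key : Lr I = Complex.I * Lr 1 := by
    simp only [hLr, ContinuousLinearMap.sub_apply, ContinuousLinearMap.comp_apply,
      ContinuousLinearMap.smul_apply, ContinuousLinearMap.apply_apply,
      Complex.ofRealCLM_apply, smul_eq_mul]
    rw [← hsymm]
    have hII : D I I = -(D 1 1) := by linarith
    rw [hII]
    push_cast
    linear_combination (((D 1) I : ℂ)) * Complex.I_sq
  have hmain : HasFDerivAt (gderiv u) ((Lr 1) • (ContinuousLinearMap.id ℂ ℂ) : ℂ →L[ℂ] ℂ) z := by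
    apply hasFDerivAt_of_restrictScalars ℝ hgL
    ext v
    simp only [ContinuousLinearMap.coe_restrictScalars', ContinuousLinearMap.smul_apply,
      ContinuousLinearMap.coe_id', id_eq, smul_eq_mul]
    rw [clm_apply_eq Lr v, key]
    simp only [smul_eq_mul, Complex.real_smul]
    linear_combination (-(Lr 1)) * (Complex.re_add_im v)
  exact hmain.differentiableAt.differentiableWithinAt

lemma clm_apply_eqR (L : ℂ →L[ℝ] ℝ) (v : ℂ) : L v = v.re • L 1 + v.im • L I := by
  conv_lhs => rw [← Complex.re_add_im v]
  have h1 : (v.re : ℂ) = v.re • (1 : ℂ) := by simp [Complex.real_smul]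
  have h2 : (v.im : ℂ) * I = v.im • I := by simp [Complex.real_smul]
  rw [h1, h2, map_add, map_smul, map_smul]

lemma exists_holo {u : ℂ → ℝ} {c : ℂ} {R r' : ℝ} (hu : HarmonicOnC u (ball c R))
    (h0 : 0 < r') (hr' : r' < R) :
    ∃ f : ℂ → ℂ, DifferentiableOn ℂ f (ball c r') ∧ ∀ z ∈ ball c r', (f z).re = u z := by
  have hg := gderiv_holo hu
  set r'' : ℝ := (r' + R) / 2 with hr''def
  have h1 : r' < r'' := by simp [hr''def]; linarith
  have h2 : r'' < R := by simp [hr''def]; linarith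
  have h2pos : (0 : ℝ) < r'' := lt_trans h0 h1
  have hsub : closedBall c r'' ⊆ ball c R := closedBall_subset_ball h2
  set r2 : NNReal := ⟨r'', h2pos.le⟩ with hr2
  have hp : HasFPowerSeriesOnBall (gderiv u) (cauchyPowerSeries (gderiv u) c r2) c r2 :=
    DifferentiableOn.hasFPowerSeriesOnBall (hg.mono hsub) (by exact_mod_cast h2pos)
  set p := cauchyPowerSeries (gderiv u) c r2 with hpdef
  set r1 : NNReal := ⟨r', h0.le⟩ with hr1
  have hrad : (r1 : ENNReal) < p.radius :=
    lt_of_lt_of_le (by exact_mod_cast h1) hp.r_le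
  have hsum : Summable (fun n => ‖p n‖ * (r1 : ℝ) ^ n) := p.summable_norm_mul_pow hrad
  set a : ℕ → ℂ := fun n => p.coeff n with hadef
  set G : ℕ → ℂ → ℂ := fun n z => ((n : ℂ) + 1)⁻¹ * a n * (z - c) ^ (n + 1) with hGdef
  set G' : ℕ → ℂ → ℂ := fun n z => a n * (z - c) ^ n with hG'def
  have hderiv : ∀ n y, y ∈ ball c r' → HasDerivAt (G n) (G' n y) y := by
    intro n y _
    have h := (((hasDerivAt_id y).sub_const c).pow (n + 1)).const_mul (((n : ℂ) + 1)⁻¹ * a n)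
    have hne : ((n : ℂ) + 1) ≠ 0 := Nat.cast_add_one_ne_zero n
    refine h.congr_deriv ?_
    simp only [hG'def, id_eq, Nat.add_sub_cancel, Nat.cast_add, Nat.cast_one, mul_one]
    field_simp
  have hbound : ∀ n y, y ∈ ball c r' → ‖G' n y‖ ≤ ‖p n‖ * (r1 : ℝ) ^ n := by
    intro n y hy
    have h1' : ‖a n‖ = ‖p n‖ := (p.norm_apply_eq_norm_coef (n := n)).symm
    have h2' : ‖y - c‖ ^ n ≤ (r1 : ℝ) ^ n := by
      apply pow_le_pow_left₀ (norm_nonneg _)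
      exact le_of_lt (mem_ball_iff_norm.mp hy)
    calc ‖a n * (y - c) ^ n‖ = ‖a n‖ * ‖y - c‖ ^ n := by rw [norm_mul, norm_pow]
    _ ≤ ‖p n‖ * (r1 : ℝ) ^ n := by rw [h1']; exact mul_le_mul_of_nonneg_left h2' (norm_nonneg _)
  have hG0 : Summable fun n => G n c := by
    have : ∀ n, G n c = 0 := fun n => by simp [hGdef]
    simpa [this] using summable_zero
  set F : ℂ → ℂ := fun z => ∑' n, G n z with hFdef
  have hkey : ∀ y ∈ ball c r', HasDerivAt F (∑' n, G' n y) y := fun y hy =>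
    hasDerivAt_tsum_of_isPreconnected hsum isOpen_ball (convex_ball c r').isPreconnected
      hderiv hbound (mem_ball_self h0) hG0 hy
  have hsum_eq : ∀ y ∈ ball c r', (∑' n, G' n y) = gderiv u y := by
    intro y hy
    have hmem : y - c ∈ Metric.eball (0 : ℂ) r2 := by
      rw [Metric.mem_eball, edist_zero_right]
      have : ‖y - c‖ < r'' := lt_trans (mem_ball_iff_norm.mp hy) h1
      exact_mod_cast (by exact_mod_cast this : ‖y - c‖₊ < r2)
    have hs := hp.hasSum hmem
    simp only [FormalMultilinearSeries.apply_eq_pow_smul_coeff, smul_eq_mul] at hs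
    rw [add_sub_cancel] at hs
    have : (fun n => (y - c) ^ n * p.coeff n) = fun n => G' n y := by
      funext n; simp [hG'def, hadef, mul_comm]
    rw [this] at hs
    exact hs.tsum_eq
  have hF : ∀ y ∈ ball c r', HasDerivAt F (gderiv u y) y := fun y hy =>
    (hsum_eq y hy) ▸ hkey y hy
  have hφ : ∀ y ∈ ball c r', HasFDerivAt (fun z => u z - (F z).re) (0 : ℂ →L[ℝ] ℝ) y := by
    intro y hy
    have hyR : y ∈ ball c R := ball_subset_ball hr'.le hy
    have hu' : HasFDerivAt u (fderiv ℝ u y) y :=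
      ((hu.1.contDiffAt (isOpen_ball.mem_nhds hyR)).differentiableAt (by norm_num)).hasFDerivAt
    have hFre := Complex.reCLM.hasFDerivAt.comp y (((hF y hy).hasFDerivAt).restrictScalars ℝ)
    have hd := hu'.sub hFre
    refine hd.congr_fderiv (ContinuousLinearMap.ext fun v => ?_).symm
    simp only [ContinuousLinearMap.zero_apply, ContinuousLinearMap.sub_apply,
      ContinuousLinearMap.comp_apply, ContinuousLinearMap.coe_restrictScalars',
      ContinuousLinearMap.smulRight_apply, ContinuousLinearMap.one_apply,
      Complex.reCLM_apply, smul_eq_mul]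
    rw [clm_apply_eqR (fderiv ℝ u y) v]
    simp only [ContinuousLinearMap.toSpanSingleton_apply, smul_eq_mul, gderiv, Complex.mul_re, Complex.sub_re, Complex.ofReal_re,
      Complex.mul_im, Complex.sub_im, Complex.ofReal_im, Complex.I_re, Complex.I_im]
    ring
  have hconst : ∀ y ∈ ball c r', u y - (F y).re = u c - (F c).re := by
    intro y hy
    exact (convex_ball c r').is_const_of_fderivWithin_eq_zero
      (fun x hx => ((hφ x hx).differentiableAt).differentiableWithinAt)
      (fun x hx => by rw [fderivWithin_of_isOpen isOpen_ball hx, (hφ x hx).fderiv])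
      hy (mem_ball_self h0)
  refine ⟨fun z => F z + ((u c - (F c).re : ℝ) : ℂ), ?_, ?_⟩
  · intro y hy
    exact (((hF y hy).differentiableAt).add_const _).differentiableWithinAt
  · intro z hz
    simp only [Complex.add_re, Complex.ofReal_re]
    have := hconst z hz
    linarith

lemma kernel_decomp {r : ℝ} (hr : 0 < r) {ζ a : ℂ} (hζ : ‖ζ‖ = r)
    (ha : ‖a‖ < r) :
    ((((ζ + a) / (ζ - a)).re : ℝ) : ℂ) =
      ζ / (ζ - a) + (starRingEnd ℂ a) * ζ / (((r ^ 2 : ℝ) : ℂ) - (starRingEnd ℂ a) * ζ) := by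
  have hζ0 : ζ ≠ 0 := by
    intro h; rw [h] at hζ; simp at hζ; exact absurd hζ.symm (ne_of_gt hr)
  have hζa : ζ - a ≠ 0 := by
    refine sub_ne_zero.mpr fun h => ?_
    rw [← h] at ha; rw [hζ] at ha; exact lt_irrefl _ ha
  have hmul : ζ * (starRingEnd ℂ) ζ = ((r ^ 2 : ℝ) : ℂ) := by
    rw [Complex.mul_conj]; norm_cast; rw [Complex.normSq_eq_norm_sq, hζ]
  have hconj : (starRingEnd ℂ) ζ = ((r ^ 2 : ℝ) : ℂ) / ζ := by
    rw [eq_div_iff hζ0]; linear_combination hmul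
  have hden : ((r ^ 2 : ℝ) : ℂ) - (starRingEnd ℂ a) * ζ ≠ 0 := by
    intro h
    rw [sub_eq_zero] at h
    have habs := congrArg (‖·‖) h
    simp only [norm_mul, Complex.norm_conj, Complex.norm_real, Real.norm_eq_abs, hζ] at habs
    rw [_root_.abs_of_nonneg (by positivity : (0:ℝ) ≤ r ^ 2)] at habs
    nlinarith [norm_nonneg a]
  have hne2 : ((r ^ 2 : ℝ) : ℂ) / ζ - (starRingEnd ℂ) a ≠ 0 := by
    have : ((r ^ 2 : ℝ) : ℂ) / ζ - (starRingEnd ℂ) a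
        = (((r ^ 2 : ℝ) : ℂ) - (starRingEnd ℂ) a * ζ) / ζ := by field_simp
    rw [this]
    exact div_ne_zero hden hζ0
  have hq : ((((ζ + a) / (ζ - a)).re : ℝ) : ℂ)
      = ((ζ + a) / (ζ - a) + (starRingEnd ℂ) ((ζ + a) / (ζ - a))) / 2 := by
    rw [Complex.add_conj]; push_cast; ring
  have hcq : (((r ^ 2 : ℝ) : ℂ) / ζ + (starRingEnd ℂ) a) / (((r ^ 2 : ℝ) : ℂ) / ζ - (starRingEnd ℂ) a)
      = (((r ^ 2 : ℝ) : ℂ) + (starRingEnd ℂ) a * ζ) / (((r ^ 2 : ℝ) : ℂ) - (starRingEnd ℂ) a * ζ) := by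
    rw [div_eq_div_iff hne2 hden, ← hconj]
    linear_combination (-(2:ℂ) * (starRingEnd ℂ) a) * hmul
  have hd2 : ((r : ℂ)) ^ 2 - (starRingEnd ℂ) a * ζ ≠ 0 := fun h => hden (by push_cast; linear_combination h)
  rw [hq, map_div₀, map_add, map_sub, hconj, hcq]
  push_cast
  rw [div_add_div _ _ hζa hd2, div_add_div _ _ hζa hd2, div_div,
    div_eq_div_iff (mul_ne_zero (mul_ne_zero hζa hd2) two_ne_zero) (mul_ne_zero hζa hd2)]
  ring

lemma holo_poisson {f : ℂ → ℂ} {c : ℂ} {r r' : ℝ} (hf : DifferentiableOn ℂ f (ball c r'))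
    (h0 : 0 < r) (hrr' : r < r') {a : ℂ} (ha : ‖a‖ < r) :
    (∫ t in (0:ℝ)..(2*Real.pi), f (circleMap c r t) *
      ((((circleMap 0 r t + a) / (circleMap 0 r t - a)).re : ℝ) : ℂ))
      = ((2 * Real.pi : ℝ) : ℂ) * f (c + a) := by
  have hsub : closedBall c r ⊆ ball c r' := closedBall_subset_ball hrr'
  have hfc : ContinuousOn f (ball c r') := hf.continuousOn
  have hca : c + a ∈ ball c r := by
    simpa [mem_ball, dist_eq_norm] using ha
  have E1cauchy : (∮ z in C(c, r), (z - (c + a))⁻¹ • f z) = (2 * ↑Real.pi * I) • f (c + a) :=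
    DifferentiableOn.circleIntegral_sub_inv_smul (hf.mono hsub) hca
  set g3 : ℂ → ℂ := fun z =>
    ((starRingEnd ℂ) a * f z) / (((r : ℂ)) ^ 2 - (starRingEnd ℂ) a * (z - c)) with hg3def
  have hden3 : ∀ z ∈ closedBall c r, ((r : ℂ)) ^ 2 - (starRingEnd ℂ) a * (z - c) ≠ 0 := by
    intro z hz h
    rw [sub_eq_zero] at h
    have habs := congrArg (‖·‖) h
    simp only [norm_pow, norm_mul, Complex.norm_conj, Complex.norm_real, Real.norm_eq_abs,
      _root_.abs_of_nonneg h0.le] at habs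
    have hzc : ‖z - c‖ ≤ r := by
      simpa [mem_closedBall, dist_eq_norm] using hz
    nlinarith [norm_nonneg a, norm_nonneg (z - c)]
  have hg3diff : DifferentiableOn ℂ g3 (closedBall c r) := by
    apply DifferentiableOn.div
    · exact (differentiableOn_const _).mul (hf.mono hsub)
    · exact (differentiableOn_const _).sub
        (((differentiableOn_id).sub_const c).const_mul _)
    · exact hden3
  have E3zero : (∮ z in C(c, r), g3 z) = 0 := by
    apply circleIntegral_eq_zero_of_differentiable_on_off_countable h0.le countable_empty
      hg3diff.continuousOn
    intro z hz
    exact (hg3diff z (ball_subset_closedBall hz.1)).differentiableAt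
      (closedBall_mem_nhds_of_mem hz.1)
  simp only [circleIntegral, deriv_circleMap] at E1cauchy E3zero
  -- continuity facts
  have hmem' : ∀ t : ℝ, circleMap c r t ∈ ball c r' := by
    intro t
    simp only [mem_ball]
    rw [dist_eq_norm]
    have : circleMap c r t - c = circleMap 0 r t := circleMap_sub_center c r t
    rw [this, norm_circleMap_zero, _root_.abs_of_nonneg h0.le]
    exact hrr'
  have hfcm : Continuous fun t => f (circleMap c r t) :=
    hfc.comp_continuous (continuous_circleMap c r) hmem'
  have habsζ : ∀ t : ℝ, ‖circleMap 0 r t‖ = r := by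
    intro t; rw [norm_circleMap_zero, _root_.abs_of_nonneg h0.le]
  have hζa : ∀ t : ℝ, circleMap 0 r t - a ≠ 0 := by
    intro t
    refine sub_ne_zero.mpr fun h => ?_
    rw [← h, habsζ t] at ha; exact lt_irrefl _ ha
  have hshift : ∀ t : ℝ, circleMap c r t - (c + a) = circleMap 0 r t - a := by
    intro t
    rw [← circleMap_sub_center c r t]; ring
  have hdenc : ∀ t : ℝ, ((r : ℂ)) ^ 2 - (starRingEnd ℂ) a * (circleMap c r t - c) ≠ 0 := by
    intro t
    exact hden3 _ (sphere_subset_closedBall (circleMap_mem_sphere c h0.le t))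
  set E1 : ℝ → ℂ := fun t =>
    (circleMap 0 r t * I) • ((circleMap c r t - (c + a))⁻¹ • f (circleMap c r t)) with hE1def
  set E3 : ℝ → ℂ := fun t => (circleMap 0 r t * I) • g3 (circleMap c r t) with hE3def
  have hcontE1 : Continuous E1 := by
    apply ((continuous_circleMap 0 r).mul continuous_const).smul
    refine Continuous.smul (f := fun t => (circleMap c r t - (c + a))⁻¹) ?_ hfcm
    apply Continuous.inv₀
    · exact (continuous_circleMap c r).sub continuous_const
    · intro t; rw [hshift t]; exact hζa t
  have hcontE3 : Continuous E3 := by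
    apply ((continuous_circleMap 0 r).mul continuous_const).smul
    apply Continuous.div
    · exact continuous_const.mul hfcm
    · exact continuous_const.sub
        (continuous_const.mul ((continuous_circleMap c r).sub continuous_const))
    · intro t; exact hdenc t
  have hpt : ∀ t : ℝ, f (circleMap c r t) *
      ((((circleMap 0 r t + a) / (circleMap 0 r t - a)).re : ℝ) : ℂ)
      = (-I) • (E1 t + E3 t) := by
    intro t
    rw [kernel_decomp h0 (habsζ t) ha]
    simp only [hE1def, hE3def, hg3def, smul_eq_mul, hshift t, circleMap_sub_center]
    push_cast
    have hd := hdenc t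
    rw [circleMap_sub_center] at hd
    push_cast at hd
    field_simp
    ring_nf
    rw [Complex.I_sq]
    ring
  rw [intervalIntegral.integral_congr (fun t _ => hpt t)]
  rw [intervalIntegral.integral_smul, intervalIntegral.integral_add
    (hcontE1.intervalIntegrable _ _) (hcontE3.intervalIntegrable _ _)]
  rw [show (∫ t in (0:ℝ)..(2*Real.pi), E1 t) = (2 * ↑Real.pi * I) • f (c + a) from E1cauchy,
    show (∫ t in (0:ℝ)..(2*Real.pi), E3 t) = 0 from E3zero]
  simp only [add_zero, smul_eq_mul]
  push_cast
  linear_combination (-(2:ℂ) * Real.pi * f (c + a)) * Complex.I_sq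

lemma poisson_one_var {u : ℂ → ℝ} {c : ℂ} {R r : ℝ} (hu : HarmonicOnC u (ball c R))
    (h0 : 0 < r) (hrR : r < R) {z : ℂ} (hz : ‖z - c‖ < r) :
    u z = (1 / (2 * Real.pi)) * ∫ t in (0:ℝ)..(2*Real.pi),
      u (c + r * Complex.exp (t * I)) *
        ((r * Complex.exp (t * I) + (z - c)) / (r * Complex.exp (t * I) - (z - c))).re := by
  set r' : ℝ := (r + R) / 2 with hr'def
  have h1 : r < r' := by simp [hr'def]; linarith
  have h2 : r' < R := by simp [hr'def]; linarith
  have h0' : 0 < r' := lt_trans h0 h1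
  obtain ⟨f, hfd, hfre⟩ := exists_holo hu h0' h2
  have hC := holo_poisson hfd h0 h1 (a := z - c) hz
  have hcm : ∀ t : ℝ, circleMap c r t = c + r * Complex.exp (t * I) := fun t => rfl
  have hcm0 : ∀ t : ℝ, circleMap 0 r t = r * Complex.exp (t * I) := fun t => by
    simp [circleMap]
  have hmem' : ∀ t : ℝ, circleMap c r t ∈ ball c r' := by
    intro t
    simp only [mem_ball]
    rw [dist_eq_norm, circleMap_sub_center, norm_circleMap_zero,
      _root_.abs_of_nonneg h0.le]
    exact h1
  have hζa : ∀ t : ℝ, circleMap 0 r t - (z - c) ≠ 0 := by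
    intro t
    refine sub_ne_zero.mpr fun h => ?_
    rw [← h, norm_circleMap_zero, _root_.abs_of_nonneg h0.le] at hz
    exact lt_irrefl _ hz
  have hfcm : Continuous fun t => f (circleMap c r t) :=
    hfd.continuousOn.comp_continuous (continuous_circleMap c r) hmem'
  have hKcont : Continuous fun t : ℝ =>
      ((circleMap 0 r t + (z - c)) / (circleMap 0 r t - (z - c))).re := by
    apply Complex.continuous_re.comp
    exact ((continuous_circleMap 0 r).add continuous_const).div
      ((continuous_circleMap 0 r).sub continuous_const) hζa
  have hFint : IntervalIntegrable (fun t => f (circleMap c r t) *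
      ((((circleMap 0 r t + (z - c)) / (circleMap 0 r t - (z - c))).re : ℝ) : ℂ))
      MeasureTheory.volume 0 (2 * Real.pi) :=
    (hfcm.mul (Complex.continuous_ofReal.comp hKcont)).intervalIntegrable _ _
  have hre := congrArg Complex.re hC
  rw [← Complex.reCLM_apply, ← ContinuousLinearMap.intervalIntegral_comp_comm _ hFint] at hre
  simp only [Complex.reCLM_apply] at hre
  have hint_eq : (∫ t in (0:ℝ)..(2*Real.pi), (f (circleMap c r t) *
      ((((circleMap 0 r t + (z - c)) / (circleMap 0 r t - (z - c))).re : ℝ) : ℂ)).re)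
      = ∫ t in (0:ℝ)..(2*Real.pi), u (c + r * Complex.exp (t * I)) *
        ((r * Complex.exp (t * I) + (z - c)) / (r * Complex.exp (t * I) - (z - c))).re := by
    apply intervalIntegral.integral_congr
    intro t _
    dsimp only
    rw [← hcm0 t, show c + circleMap 0 r t = circleMap c r t from by simp [circleMap]]
    have : (f (circleMap c r t)).re = u (circleMap c r t) := hfre _ (hmem' t)
    simp [Complex.mul_re, this]
  rw [hint_eq] at hre
  have hrhs : (((2 * Real.pi : ℝ) : ℂ) * f (c + (z - c))).re = 2 * Real.pi * u z := by
    have hzmem : z ∈ ball c r' := by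
      simp only [mem_ball]
      rw [dist_eq_norm]
      exact lt_trans hz h1
    have : c + (z - c) = z := by ring
    rw [this]
    simp [Complex.mul_re, hfre z hzmem]
  rw [hrhs] at hre
  have hπ : (2 * Real.pi) ≠ 0 := by positivity
  field_simp
  linarith [hre]

lemma poisson_two_var {z₀ w₀ : ℂ} {R : ℝ} (h : ℂ → ℂ → ℝ)
    (hharm₁ : ∀ w ∈ ball w₀ R, HarmonicOnC (fun z => h z w) (ball z₀ R))
    (hharm₂ : ∀ z ∈ ball z₀ R, HarmonicOnC (fun w => h z w) (ball w₀ R))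
    {r : ℝ} (h0 : 0 < r) (hrR : r < R) {z w : ℂ}
    (hz : ‖z - z₀‖ < r) (hw : ‖w - w₀‖ < r) :
    h z w = (1 / (2 * Real.pi) ^ 2) *
      ∫ s in (0:ℝ)..(2 * Real.pi), ∫ t in (0:ℝ)..(2 * Real.pi),
        h (z₀ + r * Complex.exp (t * I)) (w₀ + r * Complex.exp (s * I)) *
          ((r * Complex.exp (t * I) + (z - z₀)) / (r * Complex.exp (t * I) - (z - z₀))).re *
          ((r * Complex.exp (s * I) + (w - w₀)) / (r * Complex.exp (s * I) - (w - w₀))).re := by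
  have hzR : z ∈ ball z₀ R := by
    simp only [mem_ball]
    rw [dist_eq_norm]
    exact lt_trans hz hrR
  have step1 : h z w = (1 / (2 * Real.pi)) * ∫ s in (0:ℝ)..(2 * Real.pi),
      h z (w₀ + r * Complex.exp (s * I)) *
        ((r * Complex.exp (s * I) + (w - w₀)) / (r * Complex.exp (s * I) - (w - w₀))).re :=
    poisson_one_var (hharm₂ z hzR) h0 hrR hw
  have step2 : ∀ s : ℝ, h z (w₀ + r * Complex.exp (s * I))
      = (1 / (2 * Real.pi)) * ∫ t in (0:ℝ)..(2 * Real.pi),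
        h (z₀ + r * Complex.exp (t * I)) (w₀ + r * Complex.exp (s * I)) *
          ((r * Complex.exp (t * I) + (z - z₀)) / (r * Complex.exp (t * I) - (z - z₀))).re := by
    intro s
    have hwmem : w₀ + r * Complex.exp (s * I) ∈ ball w₀ R := by
      simp only [mem_ball]
      rw [dist_eq_norm, add_sub_cancel_left]
      rw [norm_mul, Complex.norm_real, Real.norm_eq_abs, _root_.abs_of_nonneg h0.le]
      rw [Complex.norm_exp]
      simp
      exact hrR
    exact poisson_one_var (hharm₁ _ hwmem) h0 hrR hz
  rw [step1]
  rw [intervalIntegral.integral_congr (g := fun s => (1 / (2 * Real.pi)) *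
      ((∫ t in (0:ℝ)..(2 * Real.pi),
        h (z₀ + r * Complex.exp (t * I)) (w₀ + r * Complex.exp (s * I)) *
          ((r * Complex.exp (t * I) + (z - z₀)) / (r * Complex.exp (t * I) - (z - z₀))).re) *
        ((r * Complex.exp (s * I) + (w - w₀)) / (r * Complex.exp (s * I) - (w - w₀))).re))
    (fun s _ => by dsimp only; rw [step2 s]; ring)]
  rw [intervalIntegral.integral_const_mul]
  have : ∀ s : ℝ, (∫ t in (0:ℝ)..(2 * Real.pi),
        h (z₀ + r * Complex.exp (t * I)) (w₀ + r * Complex.exp (s * I)) *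
          ((r * Complex.exp (t * I) + (z - z₀)) / (r * Complex.exp (t * I) - (z - z₀))).re) *
        ((r * Complex.exp (s * I) + (w - w₀)) / (r * Complex.exp (s * I) - (w - w₀))).re
      = ∫ t in (0:ℝ)..(2 * Real.pi),
        h (z₀ + r * Complex.exp (t * I)) (w₀ + r * Complex.exp (s * I)) *
          ((r * Complex.exp (t * I) + (z - z₀)) / (r * Complex.exp (t * I) - (z - z₀))).re *
          ((r * Complex.exp (s * I) + (w - w₀)) / (r * Complex.exp (s * I) - (w - w₀))).re :=
    fun s => (intervalIntegral.integral_mul_const _ _).symm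
  rw [intervalIntegral.integral_congr (fun s _ => this s)]
  rw [← mul_assoc]
  congr 1
  ring

/-- two-variable Poisson formula: a function continuous on a closed bidisc
and separately harmonic on the open bidisc is reproduced by the product of Poisson
kernels on any smaller bicircle. -/
theorem poisson_formula_two_variables
    (z₀ w₀ : ℂ) (R : ℝ) (hR : 0 < R) (h : ℂ → ℂ → ℝ)
    (hcont : ContinuousOn (fun p : ℂ × ℂ => h p.1 p.2)
      (closedBall z₀ R ×ˢ closedBall w₀ R))
    (hharm₁ : ∀ w ∈ ball w₀ R, HarmonicOnC (fun z => h z w) (ball z₀ R))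
    (hharm₂ : ∀ z ∈ ball z₀ R, HarmonicOnC (fun w => h z w) (ball w₀ R)) :
    ∀ r : ℝ, 0 < r → r ≤ R → ∀ z w : ℂ,
      ‖z - z₀‖ < r → ‖w - w₀‖ < r →
      h z w = (1 / (2 * Real.pi) ^ 2) *
        ∫ s in (0 : ℝ)..(2 * Real.pi), ∫ t in (0 : ℝ)..(2 * Real.pi),
          h (z₀ + r * Complex.exp (t * Complex.I)) (w₀ + r * Complex.exp (s * Complex.I)) *
            ((r * Complex.exp (t * Complex.I) + (z - z₀)) /
              (r * Complex.exp (t * Complex.I) - (z - z₀))).re *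
            ((r * Complex.exp (s * Complex.I) + (w - w₀)) /
              (r * Complex.exp (s * Complex.I) - (w - w₀))).re := by

  intro r hr hrR z w hz hw
  set proj : ℝ → ℝ := fun ρ => max 0 (min ρ 1) with hprojdef
  have hprojcont : Continuous proj := continuous_const.max (continuous_id.min continuous_const)
  have hproj0 : ∀ ρ, 0 ≤ proj ρ := fun ρ => le_max_left _ _
  have hproj1' : ∀ ρ, proj ρ ≤ 1 := fun ρ => max_le (by norm_num) (min_le_right _ _)
  have hproj1 : proj 1 = 1 := by simp [hprojdef]
  have hprojid : ∀ ρ ∈ Ioo (0:ℝ) 1, proj ρ = ρ := by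
    intro ρ hρ
    have h1 : min ρ 1 = ρ := min_eq_left hρ.2.le
    rw [hprojdef]
    dsimp only
    rw [h1, max_eq_right hρ.1.le]
  have hzR : ‖z - z₀‖ ≤ R := le_of_lt (lt_of_lt_of_le hz hrR)
  have hwR : ‖w - w₀‖ ≤ R := le_of_lt (lt_of_lt_of_le hw hrR)
  have habsexp : ∀ x : ℝ, ‖(r : ℂ) * Complex.exp (x * I)‖ = r := by
    intro x
    rw [norm_mul, Complex.norm_real, Real.norm_eq_abs, _root_.abs_of_nonneg hr.le, Complex.norm_exp]
    simp
  have hζz : ∀ x : ℝ, (r : ℂ) * Complex.exp (x * I) - (z - z₀) ≠ 0 := by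
    intro x
    refine sub_ne_zero.mpr fun hE => ?_
    rw [← hE, habsexp x] at hz; exact lt_irrefl _ hz
  have hζw : ∀ x : ℝ, (r : ℂ) * Complex.exp (x * I) - (w - w₀) ≠ 0 := by
    intro x
    refine sub_ne_zero.mpr fun hE => ?_
    rw [← hE, habsexp x] at hw; exact lt_irrefl _ hw
  have hexpc : Continuous fun x : ℝ => ((r : ℂ) * Complex.exp (x * I)) :=
    continuous_const.mul (Complex.continuous_exp.comp (Complex.continuous_ofReal.mul continuous_const))
  have hKt : Continuous fun x : ℝ =>
      (((r : ℂ) * Complex.exp (x * I) + (z - z₀)) / ((r : ℂ) * Complex.exp (x * I) - (z - z₀))).re :=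
    Complex.continuous_re.comp (((hexpc.add continuous_const)).div (hexpc.sub continuous_const) hζz)
  have hKs : Continuous fun x : ℝ =>
      (((r : ℂ) * Complex.exp (x * I) + (w - w₀)) / ((r : ℂ) * Complex.exp (x * I) - (w - w₀))).re :=
    Complex.continuous_re.comp (((hexpc.add continuous_const)).div (hexpc.sub continuous_const) hζw)
  have hprojC : Continuous fun ρ : ℝ => ((proj ρ : ℝ) : ℂ) :=
    Complex.continuous_ofReal.comp hprojcont
  -- membership facts
  have hmem1 : ∀ ρ : ℝ, z₀ + ((proj ρ : ℝ) : ℂ) * (z - z₀) ∈ closedBall z₀ R := by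
    intro ρ
    simp only [mem_closedBall, dist_eq_norm, add_sub_cancel_left, norm_mul,
      Complex.norm_real, Real.norm_eq_abs, _root_.abs_of_nonneg (hproj0 ρ)]
    calc proj ρ * ‖z - z₀‖ ≤ 1 * R :=
          mul_le_mul (hproj1' ρ) hzR (norm_nonneg _) (by norm_num)
    _ = R := one_mul R
  have hmem2 : ∀ ρ : ℝ, w₀ + ((proj ρ : ℝ) : ℂ) * (w - w₀) ∈ closedBall w₀ R := by
    intro ρ
    simp only [mem_closedBall, dist_eq_norm, add_sub_cancel_left, norm_mul,
      Complex.norm_real, Real.norm_eq_abs, _root_.abs_of_nonneg (hproj0 ρ)]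
    calc proj ρ * ‖w - w₀‖ ≤ 1 * R :=
          mul_le_mul (hproj1' ρ) hwR (norm_nonneg _) (by norm_num)
    _ = R := one_mul R
  have hmem3 : ∀ (ρ x : ℝ), z₀ + ((proj ρ : ℝ) : ℂ) * ((r : ℂ) * Complex.exp (x * I)) ∈ closedBall z₀ R := by
    intro ρ x
    simp only [mem_closedBall, dist_eq_norm, add_sub_cancel_left, norm_mul,
      Complex.norm_real, Real.norm_eq_abs, _root_.abs_of_nonneg (hproj0 ρ), _root_.abs_of_nonneg hr.le,
      Complex.norm_exp]
    simp only [Complex.mul_re, Complex.ofReal_re, Complex.I_re, Complex.ofReal_im, Complex.I_im,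
      mul_zero, zero_mul, mul_one, sub_zero, zero_sub]
    rw [Real.exp_zero, mul_one]
    calc proj ρ * r ≤ 1 * R := mul_le_mul (hproj1' ρ) hrR hr.le (by norm_num)
    _ = R := one_mul R
  have hmem4 : ∀ (ρ x : ℝ), w₀ + ((proj ρ : ℝ) : ℂ) * ((r : ℂ) * Complex.exp (x * I)) ∈ closedBall w₀ R := by
    intro ρ x
    simp only [mem_closedBall, dist_eq_norm, add_sub_cancel_left, norm_mul,
      Complex.norm_real, Real.norm_eq_abs, _root_.abs_of_nonneg (hproj0 ρ), _root_.abs_of_nonneg hr.le,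
      Complex.norm_exp]
    simp only [Complex.mul_re, Complex.ofReal_re, Complex.I_re, Complex.ofReal_im, Complex.I_im,
      mul_zero, zero_mul, mul_one, sub_zero, zero_sub]
    rw [Real.exp_zero, mul_one]
    calc proj ρ * r ≤ 1 * R := mul_le_mul (hproj1' ρ) hrR hr.le (by norm_num)
    _ = R := one_mul R
  -- the two continuous functions of ρ
  set L' : ℝ → ℝ := fun ρ =>
    h (z₀ + ((proj ρ : ℝ) : ℂ) * (z - z₀)) (w₀ + ((proj ρ : ℝ) : ℂ) * (w - w₀)) with hL'def
  set Φ' : ℝ → ℝ := fun ρ => (1 / (2 * Real.pi) ^ 2) *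
    ∫ s in (0 : ℝ)..(2 * Real.pi), ∫ t in (0 : ℝ)..(2 * Real.pi),
      h (z₀ + ((proj ρ : ℝ) : ℂ) * ((r : ℂ) * Complex.exp (t * I)))
        (w₀ + ((proj ρ : ℝ) : ℂ) * ((r : ℂ) * Complex.exp (s * I))) *
        (((r : ℂ) * Complex.exp (t * I) + (z - z₀)) / ((r : ℂ) * Complex.exp (t * I) - (z - z₀))).re *
        (((r : ℂ) * Complex.exp (s * I) + (w - w₀)) / ((r : ℂ) * Complex.exp (s * I) - (w - w₀))).re
    with hΦ'def
  have hL'cont : Continuous L' := by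
    have hpair : Continuous (fun ρ : ℝ => (z₀ + ((proj ρ : ℝ) : ℂ) * (z - z₀),
        w₀ + ((proj ρ : ℝ) : ℂ) * (w - w₀))) :=
      (continuous_const.add (hprojC.mul continuous_const)).prodMk
        (continuous_const.add (hprojC.mul continuous_const))
    exact hcont.comp_continuous hpair (fun ρ => mk_mem_prod (hmem1 ρ) (hmem2 ρ))
  have hΦ'cont : Continuous Φ' := by
    apply continuous_const.mul
    have hFcont : Continuous (Function.uncurry fun (q : ℝ × ℝ) (t : ℝ) =>
        h (z₀ + ((proj q.1 : ℝ) : ℂ) * ((r : ℂ) * Complex.exp (t * I)))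
          (w₀ + ((proj q.1 : ℝ) : ℂ) * ((r : ℂ) * Complex.exp (q.2 * I))) *
          (((r : ℂ) * Complex.exp (t * I) + (z - z₀)) / ((r : ℂ) * Complex.exp (t * I) - (z - z₀))).re *
          (((r : ℂ) * Complex.exp (q.2 * I) + (w - w₀)) / ((r : ℂ) * Complex.exp (q.2 * I) - (w - w₀))).re) := by
      apply Continuous.mul
      apply Continuous.mul
      · have hpair : Continuous (fun p : (ℝ × ℝ) × ℝ =>
            (z₀ + ((proj p.1.1 : ℝ) : ℂ) * ((r : ℂ) * Complex.exp (p.2 * I)),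
             w₀ + ((proj p.1.1 : ℝ) : ℂ) * ((r : ℂ) * Complex.exp (p.1.2 * I)))) :=
          (continuous_const.add ((hprojC.comp (continuous_fst.comp continuous_fst)).mul
              (hexpc.comp continuous_snd))).prodMk
            (continuous_const.add ((hprojC.comp (continuous_fst.comp continuous_fst)).mul
              (hexpc.comp (continuous_snd.comp continuous_fst))))
        exact hcont.comp_continuous hpair (fun p => mk_mem_prod (hmem3 _ _) (hmem4 _ _))
      · exact hKt.comp continuous_snd
      · exact hKs.comp (continuous_snd.comp continuous_fst)
    have hinner := continuous_parametric_intervalIntegral_of_continuous'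
      (μ := MeasureTheory.volume) hFcont 0 (2 * Real.pi)
    exact continuous_parametric_intervalIntegral_of_continuous'
      (μ := MeasureTheory.volume) (f := fun (ρ : ℝ) (s : ℝ) =>
        ∫ t in (0 : ℝ)..(2 * Real.pi),
          h (z₀ + ((proj ρ : ℝ) : ℂ) * ((r : ℂ) * Complex.exp (t * I)))
            (w₀ + ((proj ρ : ℝ) : ℂ) * ((r : ℂ) * Complex.exp (s * I))) *
            (((r : ℂ) * Complex.exp (t * I) + (z - z₀)) / ((r : ℂ) * Complex.exp (t * I) - (z - z₀))).re *
            (((r : ℂ) * Complex.exp (s * I) + (w - w₀)) / ((r : ℂ) * Complex.exp (s * I) - (w - w₀))).re)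
      (by exact hinner) 0 (2 * Real.pi)
  have heq : Set.EqOn L' Φ' (Ioo (0:ℝ) 1) := by
    intro ρ hρ
    have hρr : 0 < ρ * r := mul_pos hρ.1 hr
    have hρrR : ρ * r < R := lt_of_lt_of_le (by nlinarith [hρ.2, hr]) hrR
    have hρC : ((ρ : ℝ) : ℂ) ≠ 0 := Complex.ofReal_ne_zero.mpr (ne_of_gt hρ.1)
    have hz' : ‖z₀ + (ρ : ℂ) * (z - z₀) - z₀‖ < ρ * r := by
      rw [add_sub_cancel_left, norm_mul, Complex.norm_real, Real.norm_eq_abs, _root_.abs_of_nonneg hρ.1.le]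
      exact (mul_lt_mul_iff_right₀ hρ.1).mpr hz
    have hw' : ‖w₀ + (ρ : ℂ) * (w - w₀) - w₀‖ < ρ * r := by
      rw [add_sub_cancel_left, norm_mul, Complex.norm_real, Real.norm_eq_abs, _root_.abs_of_nonneg hρ.1.le]
      exact (mul_lt_mul_iff_right₀ hρ.1).mpr hw
    have hP2 := poisson_two_var h hharm₁ hharm₂ hρr hρrR hz' hw'
    simp only [hL'def, hΦ'def, hprojid ρ hρ]
    rw [hP2]
    congr 1
    apply intervalIntegral.integral_congr
    intro s _
    dsimp only
    apply intervalIntegral.integral_congr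
    intro t _
    dsimp only
    rw [add_sub_cancel_left, add_sub_cancel_left]
    have harg : ∀ e : ℂ, ((↑(ρ * r) : ℂ)) * e = ((ρ : ℝ) : ℂ) * ((r : ℂ) * e) := by
      intro e; push_cast; ring
    have hker : ∀ (e a : ℂ), ((↑(ρ * r) : ℂ) * e + ((ρ : ℝ) : ℂ) * a) /
        ((↑(ρ * r) : ℂ) * e - ((ρ : ℝ) : ℂ) * a) = ((r : ℂ) * e + a) / ((r : ℂ) * e - a) := by
      intro e a
      rw [harg e, ← mul_add, ← mul_sub, mul_div_mul_left _ _ hρC]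
    rw [hker, hker, harg, harg]
  have hmem1' : (1 : ℝ) ∈ closure (Ioo (0:ℝ) 1) := by
    rw [closure_Ioo (by norm_num : (0:ℝ) ≠ 1)]
    exact ⟨by norm_num, le_rfl⟩
  have hfinal := (heq.closure hL'cont hΦ'cont) hmem1'
  simp only [hL'def, hΦ'def, hproj1, Complex.ofReal_one, one_mul] at hfinal
  rw [show z₀ + (z - z₀) = z by ring, show w₀ + (w - w₀) = w by ring] at hfinal
  exact hfinal
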